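/- The integrals I₂ = (v₂v₄-1)(v₁v₃-1)(v₀v₂-1)/(v₀v₁v₂v₃v₄) and I₃ = (v₁v₄+1)(v₀v₃+1)/(v₀v₁v₂v₃v₄) of the (3,-2) KdV reduction are in involution with respect to the Poisson bracket with structure matrix Ω₁₃ = -v₀²v₂², Ω₁₄ = v₀²v₃², Ω₁₅ = v₀²v₂²v₄², Ω₂₄ = -v₁²v₃², Ω₂₅ = v₁²v₄², Ω₃₅ = -v₂²v₄²: {I₂, I₃} = ∇I₂ · Ω · (∇I₃)ᵀ = 0. -/

import Mathlib

open Matrix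

lemma deriv1 (a b c x : ℝ) (hc : c ≠ 0) (hx : x ≠ 0) :
    deriv (fun t => (a*t+b)/(c*t)) x = -b/(c*x^2) := by
  have h1 : HasDerivAt (fun t : ℝ => a*t+b) a x := by
    simpa using ((hasDerivAt_id x).const_mul a).add_const b
  have h2 : HasDerivAt (fun t : ℝ => c*t) c x := by
    simpa using (hasDerivAt_id x).const_mul c
  have := (h1.div h2 (by simp [hc, hx])).deriv
  show deriv ((fun t => a*t+b) / fun t => c*t) x = _
  rw [this]; field_simp; ring

lemma deriv2 (a b c d x : ℝ) (hd : d ≠ 0) (hx : x ≠ 0) :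
    deriv (fun t => (a*t^2+b*t+c)/(d*t)) x = (a*x^2-c)/(d*x^2) := by
  have h1 : HasDerivAt (fun t : ℝ => a*t^2+b*t+c) (2*a*x+b) x := by
    have := (((hasDerivAt_pow 2 x).const_mul a).add ((hasDerivAt_id x).const_mul b)).add_const c
    simpa [mul_comm, mul_assoc, mul_left_comm] using this
  have h2 : HasDerivAt (fun t : ℝ => d*t) d x := by
    simpa using (hasDerivAt_id x).const_mul d
  have := (h1.div h2 (by simp [hd, hx])).deriv
  show deriv ((fun t => a*t^2+b*t+c) / fun t => d*t) x = _
  rw [this]; field_simp; ring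


lemma upd_ne (v : Fin 5 → ℝ) {l i : Fin 5} (hi : i ≠ l) (t : ℝ) :
    Function.update v l t i = v i := Function.update_of_ne hi t v

lemma upd_eq (v : Fin 5 → ℝ) (l : Fin 5) (t : ℝ) :
    Function.update v l t l = t := Function.update_self l t v

/-- The structure matrix of the KdV (3,-2) reduction. -/
noncomputable def kdvOmega (v : Fin 5 → ℝ) : Matrix (Fin 5) (Fin 5) ℝ :=
  !![0, 0, -(v 0)^2*(v 2)^2, (v 0)^2*(v 3)^2, (v 0)^2*(v 2)^2*(v 4)^2;
     0, 0, 0, -(v 1)^2*(v 3)^2, (v 1)^2*(v 4)^2;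
     (v 0)^2*(v 2)^2, 0, 0, 0, -(v 2)^2*(v 4)^2;
     -(v 0)^2*(v 3)^2, (v 1)^2*(v 3)^2, 0, 0, 0;
     -(v 0)^2*(v 2)^2*(v 4)^2, -(v 1)^2*(v 4)^2, (v 2)^2*(v 4)^2, 0, 0]

/-- The integral I₂ of the KdV reduction. -/
noncomputable def kdvI2 (v : Fin 5 → ℝ) : ℝ :=
  (v 2 * v 4 - 1) * (v 1 * v 3 - 1) * (v 0 * v 2 - 1) / (v 0 * v 1 * v 2 * v 3 * v 4)

/-- The integral I₃ of the KdV reduction. -/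
noncomputable def kdvI3 (v : Fin 5 → ℝ) : ℝ :=
  (v 1 * v 4 + 1) * (v 0 * v 3 + 1) / (v 0 * v 1 * v 2 * v 3 * v 4)

/-- Gradient of a function on ℝ⁵ (vector of partial derivatives). -/
noncomputable def grad (f : (Fin 5 → ℝ) → ℝ) (v : Fin 5 → ℝ) : Fin 5 → ℝ :=
  fun l => deriv (fun t => f (Function.update v l t)) (v l)

set_option maxHeartbeats 4000000 in
/-- I₂ and I₃ are in involution with respect to the KdV Poisson bracket. -/
theorem kdvI2_I3_involution (v : Fin 5 → ℝ) (h : ∀ i, v i ≠ 0) :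
    grad kdvI2 v ⬝ᵥ (kdvOmega v *ᵥ grad kdvI3 v) = 0 := by
  have m4 : ∀ i j k l : Fin 5, v i * v j * v k * v l ≠ 0 := fun i j k l =>
    mul_ne_zero (mul_ne_zero (mul_ne_zero (h i) (h j)) (h k)) (h l)
  have g0 : grad kdvI2 v 0
      = -(-((v 2*v 4-1)*(v 1*v 3-1)))/((v 1*v 2*v 3*v 4)*(v 0)^2) := by
    have e : (fun t => kdvI2 (Function.update v 0 t))
        = fun t => (((v 2*v 4-1)*(v 1*v 3-1)*(v 2))*t
            + (-((v 2*v 4-1)*(v 1*v 3-1))))/((v 1*v 2*v 3*v 4)*t) := by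
      funext t; simp only [kdvI2, upd_ne v (show ((1:Fin 5) ≠ 0) by decide), upd_ne v (show ((2:Fin 5) ≠ 0) by decide), upd_ne v (show ((3:Fin 5) ≠ 0) by decide), upd_ne v (show ((4:Fin 5) ≠ 0) by decide), upd_eq]; ring
    simp only [grad]; rw [e, deriv1 _ _ _ _ (m4 1 2 3 4) (h 0)]
  have g1 : grad kdvI2 v 1
      = -(-((v 2*v 4-1)*(v 0*v 2-1)))/((v 0*v 2*v 3*v 4)*(v 1)^2) := by
    have e : (fun t => kdvI2 (Function.update v 1 t))
        = fun t => (((v 2*v 4-1)*(v 0*v 2-1)*(v 3))*t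
            + (-((v 2*v 4-1)*(v 0*v 2-1))))/((v 0*v 2*v 3*v 4)*t) := by
      funext t; simp only [kdvI2, upd_ne v (show ((0:Fin 5) ≠ 1) by decide), upd_ne v (show ((2:Fin 5) ≠ 1) by decide), upd_ne v (show ((3:Fin 5) ≠ 1) by decide), upd_ne v (show ((4:Fin 5) ≠ 1) by decide), upd_eq]; ring
    simp only [grad]; rw [e, deriv1 _ _ _ _ (m4 0 2 3 4) (h 1)]
  have g2 : grad kdvI2 v 2
      = (((v 1*v 3-1)*(v 0*v 4))*(v 2)^2 - (v 1*v 3-1))/((v 0*v 1*v 3*v 4)*(v 2)^2) := by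
    have e : (fun t => kdvI2 (Function.update v 2 t))
        = fun t => (((v 1*v 3-1)*(v 0*v 4))*t^2
            + (-((v 1*v 3-1)*(v 0+v 4)))*t + (v 1*v 3-1))/((v 0*v 1*v 3*v 4)*t) := by
      funext t; simp only [kdvI2, upd_ne v (show ((0:Fin 5) ≠ 2) by decide), upd_ne v (show ((1:Fin 5) ≠ 2) by decide), upd_ne v (show ((3:Fin 5) ≠ 2) by decide), upd_ne v (show ((4:Fin 5) ≠ 2) by decide), upd_eq]; ring
    simp only [grad]; rw [e, deriv2 _ _ _ _ _ (m4 0 1 3 4) (h 2)]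
  have g3 : grad kdvI2 v 3
      = -(-((v 2*v 4-1)*(v 0*v 2-1)))/((v 0*v 1*v 2*v 4)*(v 3)^2) := by
    have e : (fun t => kdvI2 (Function.update v 3 t))
        = fun t => (((v 2*v 4-1)*(v 0*v 2-1)*(v 1))*t
            + (-((v 2*v 4-1)*(v 0*v 2-1))))/((v 0*v 1*v 2*v 4)*t) := by
      funext t; simp only [kdvI2, upd_ne v (show ((0:Fin 5) ≠ 3) by decide), upd_ne v (show ((1:Fin 5) ≠ 3) by decide), upd_ne v (show ((2:Fin 5) ≠ 3) by decide), upd_ne v (show ((4:Fin 5) ≠ 3) by decide), upd_eq]; ring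
    simp only [grad]; rw [e, deriv1 _ _ _ _ (m4 0 1 2 4) (h 3)]
  have g4 : grad kdvI2 v 4
      = -(-((v 1*v 3-1)*(v 0*v 2-1)))/((v 0*v 1*v 2*v 3)*(v 4)^2) := by
    have e : (fun t => kdvI2 (Function.update v 4 t))
        = fun t => (((v 1*v 3-1)*(v 0*v 2-1)*(v 2))*t
            + (-((v 1*v 3-1)*(v 0*v 2-1))))/((v 0*v 1*v 2*v 3)*t) := by
      funext t; simp only [kdvI2, upd_ne v (show ((0:Fin 5) ≠ 4) by decide), upd_ne v (show ((1:Fin 5) ≠ 4) by decide), upd_ne v (show ((2:Fin 5) ≠ 4) by decide), upd_ne v (show ((3:Fin 5) ≠ 4) by decide), upd_eq]; ring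
    simp only [grad]; rw [e, deriv1 _ _ _ _ (m4 0 1 2 3) (h 4)]
  have k0 : grad kdvI3 v 0
      = -((v 1*v 4+1))/((v 1*v 2*v 3*v 4)*(v 0)^2) := by
    have e : (fun t => kdvI3 (Function.update v 0 t))
        = fun t => (((v 1*v 4+1)*(v 3))*t + ((v 1*v 4+1)))/((v 1*v 2*v 3*v 4)*t) := by
      funext t; simp only [kdvI3, upd_ne v (show ((1:Fin 5) ≠ 0) by decide), upd_ne v (show ((2:Fin 5) ≠ 0) by decide), upd_ne v (show ((3:Fin 5) ≠ 0) by decide), upd_ne v (show ((4:Fin 5) ≠ 0) by decide), upd_eq]; ring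
    simp only [grad]; rw [e, deriv1 _ _ _ _ (m4 1 2 3 4) (h 0)]
  have k1 : grad kdvI3 v 1
      = -((v 0*v 3+1))/((v 0*v 2*v 3*v 4)*(v 1)^2) := by
    have e : (fun t => kdvI3 (Function.update v 1 t))
        = fun t => (((v 0*v 3+1)*(v 4))*t + ((v 0*v 3+1)))/((v 0*v 2*v 3*v 4)*t) := by
      funext t; simp only [kdvI3, upd_ne v (show ((0:Fin 5) ≠ 1) by decide), upd_ne v (show ((2:Fin 5) ≠ 1) by decide), upd_ne v (show ((3:Fin 5) ≠ 1) by decide), upd_ne v (show ((4:Fin 5) ≠ 1) by decide), upd_eq]; ring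
    simp only [grad]; rw [e, deriv1 _ _ _ _ (m4 0 2 3 4) (h 1)]
  have k2 : grad kdvI3 v 2
      = -((v 1*v 4+1)*(v 0*v 3+1))/((v 0*v 1*v 3*v 4)*(v 2)^2) := by
    have e : (fun t => kdvI3 (Function.update v 2 t))
        = fun t => ((0:ℝ)*t + ((v 1*v 4+1)*(v 0*v 3+1)))/((v 0*v 1*v 3*v 4)*t) := by
      funext t; simp only [kdvI3, upd_ne v (show ((0:Fin 5) ≠ 2) by decide), upd_ne v (show ((1:Fin 5) ≠ 2) by decide), upd_ne v (show ((3:Fin 5) ≠ 2) by decide), upd_ne v (show ((4:Fin 5) ≠ 2) by decide), upd_eq]; ring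
    simp only [grad]; rw [e, deriv1 _ _ _ _ (m4 0 1 3 4) (h 2)]
  have k3 : grad kdvI3 v 3
      = -((v 1*v 4+1))/((v 0*v 1*v 2*v 4)*(v 3)^2) := by
    have e : (fun t => kdvI3 (Function.update v 3 t))
        = fun t => (((v 1*v 4+1)*(v 0))*t + ((v 1*v 4+1)))/((v 0*v 1*v 2*v 4)*t) := by
      funext t; simp only [kdvI3, upd_ne v (show ((0:Fin 5) ≠ 3) by decide), upd_ne v (show ((1:Fin 5) ≠ 3) by decide), upd_ne v (show ((2:Fin 5) ≠ 3) by decide), upd_ne v (show ((4:Fin 5) ≠ 3) by decide), upd_eq]; ring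
    simp only [grad]; rw [e, deriv1 _ _ _ _ (m4 0 1 2 4) (h 3)]
  have k4 : grad kdvI3 v 4
      = -((v 0*v 3+1))/((v 0*v 1*v 2*v 3)*(v 4)^2) := by
    have e : (fun t => kdvI3 (Function.update v 4 t))
        = fun t => (((v 0*v 3+1)*(v 1))*t + ((v 0*v 3+1)))/((v 0*v 1*v 2*v 3)*t) := by
      funext t; simp only [kdvI3, upd_ne v (show ((0:Fin 5) ≠ 4) by decide), upd_ne v (show ((1:Fin 5) ≠ 4) by decide), upd_ne v (show ((2:Fin 5) ≠ 4) by decide), upd_ne v (show ((3:Fin 5) ≠ 4) by decide), upd_eq]; ring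
    simp only [grad]; rw [e, deriv1 _ _ _ _ (m4 0 1 2 3) (h 4)]
  simp only [dotProduct, Matrix.mulVec, Fin.sum_univ_five, g0, g1, g2, g3, g4,
    k0, k1, k2, k3, k4]
  simp [kdvOmega, Matrix.vecHead, Matrix.vecTail]
  have h0 := h 0; have h1 := h 1; have h2 := h 2; have h3 := h 3; have h4 := h 4
  field_simp
  ring
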